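/- Let n ≥ 3. If ξ ∈ ℂ^n is nonzero and η ∈ ℂ^n satisfies (η_i ξ_j + η_j ξ_i)/2 = δ_{ij} · (Σ_{k=1}^n η_kξ_k)/n for all 1 ≤ i, j ≤ n, then η = 0. That is, the deviatoric symmetric gradient operator ℰ_d is ℂ-elliptic in every dimension n ≥ 3. -/
import Mathlib


/-- The deviatoric symmetric gradient is ℂ-elliptic in every dimension
`n ≥ 3`: if `ξ ∈ ℂ^n` is nonzero and `η ∈ ℂ^n` satisfies
`(η i * ξ j + η j * ξ i)/2 = δ_{ij} * (∑ k, η k * ξ k)/n` for all `i, j`, then `η = 0`. -/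
theorem deviatoric_CElliptic_of_three_le (n : ℕ) (hn : 3 ≤ n) (ξ η : Fin n → ℂ) (hξ : ξ ≠ 0)
    (h : ∀ i j : Fin n,
      (η i * ξ j + η j * ξ i) / 2 =
        (if i = j then (1 : ℂ) else 0) * ((∑ k, η k * ξ k) / (n : ℂ))) : η = 0 := by
  set c : ℂ := (∑ k, η k * ξ k) / (n : ℂ) with hc
  clear_value c
  have hdiag : ∀ i, η i * ξ i = c := by
    intro i
    have hi := h i i
    simp only [if_pos rfl, if_true, one_mul] at hi
    linear_combination hi
  have hoff : ∀ i j : Fin n, i ≠ j → η i * ξ j = -(η j * ξ i) := by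
    intro i j hij
    have hij' := h i j
    simp only [if_neg hij, zero_mul] at hij'
    linear_combination 2 * hij'
  have hsq : ∀ i j : Fin n, i ≠ j → (η i * ξ j) ^ 2 = -c ^ 2 := by
    intro i j hij
    have h1 : (η i * ξ j) * (η j * ξ i) = c * c := by
      have := hdiag i
      have := hdiag j
      calc (η i * ξ j) * (η j * ξ i) = (η i * ξ i) * (η j * ξ j) := by ring
        _ = c * c := by rw [hdiag i, hdiag j]
    have h2 := hoff i j hij
    linear_combination (η i * ξ j) * h2 - h1

  have hc0 : c = 0 := by
    set i0 : Fin n := ⟨0, by omega⟩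
    set i1 : Fin n := ⟨1, by omega⟩
    set i2 : Fin n := ⟨2, by omega⟩
    have h01 : i0 ≠ i1 := by intro hx; simp [i0, i1, Fin.ext_iff] at hx
    have h12 : i1 ≠ i2 := by intro hx; simp [i1, i2, Fin.ext_iff] at hx
    have h02 : i0 ≠ i2 := by intro hx; simp [i0, i2, Fin.ext_iff] at hx
    have key : (η i0 * ξ i1) * (η i1 * ξ i2) = (η i0 * ξ i2) * c := by
      calc (η i0 * ξ i1) * (η i1 * ξ i2) = (η i0 * ξ i2) * (η i1 * ξ i1) := by ring
        _ = (η i0 * ξ i2) * c := by rw [hdiag i1]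
    have keysq : ((η i0 * ξ i1) * (η i1 * ξ i2)) ^ 2 = ((η i0 * ξ i2) * c) ^ 2 := by
      rw [key]
    have e1 := hsq i0 i1 h01
    have e2 := hsq i1 i2 h12
    have e3 := hsq i0 i2 h02
    have : c ^ 4 = -c ^ 4 := by
      have l : ((η i0 * ξ i1) * (η i1 * ξ i2)) ^ 2 = c ^ 4 := by
        have : ((η i0 * ξ i1) * (η i1 * ξ i2)) ^ 2
            = (η i0 * ξ i1) ^ 2 * (η i1 * ξ i2) ^ 2 := by ring
        rw [this, e1, e2]; ring
      have r : ((η i0 * ξ i2) * c) ^ 2 = -c ^ 4 := by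
        have : ((η i0 * ξ i2) * c) ^ 2 = (η i0 * ξ i2) ^ 2 * c ^ 2 := by ring
        rw [this, e3]; ring
      linear_combination keysq - l + r
    have h4 : c ^ 4 = 0 := by linear_combination this / 2
    exact pow_eq_zero_iff (by norm_num) |>.mp h4
  obtain ⟨i, hi⟩ : ∃ i, ξ i ≠ 0 := by
    by_contra hcon
    push_neg at hcon
    exact hξ (funext fun i => hcon i)
  have hηi : η i = 0 := by
    have := hdiag i
    rw [hc0] at this
    rcases mul_eq_zero.mp this with h' | h'
    · exact h'
    · exact absurd h' hi
  funext j
  by_cases hji : j = i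
  · simpa [hji] using hηi
  · have := hoff j i hji
    rw [hηi, zero_mul, neg_zero] at this
    rcases mul_eq_zero.mp this with h' | h'
    · exact h'
    · exact absurd h' hi
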